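/- Fix a finite set of jobs J with a designated common-best job, agents N, and linear preference orderings where each agent ranks the common-best job first. For each agent i, let N_i(R) be the set of Pareto efficient assignments (bijections from N to J) that assign the common-best job to agent i, and n_i(R) = |N_i(R)|. Then for every agent i: the sum over j ≠ i of n_j(R) is at least n_i(R). -/

import Mathlib

/-- An assignment `μ` (a bijection from agents to jobs) is Pareto efficient at the strict
preference profile `P`: no other assignment gives every agent a weakly better job and
some agent a strictly better job. -/
def ParetoEff {N J : Type*} (P : N → J → J → Prop) (μ : N ≃ J) : Prop :=
  ¬ ∃ ν : N ≃ J, (∀ i : N, ν i = μ i ∨ P i (ν i) (μ i)) ∧ ∃ i : N, P i (ν i) (μ i)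

/-- A finite nonempty set has a maximum w.r.t. a strict total order. -/
lemma exists_sto_max {J : Type*} (r : J → J → Prop) (h : IsStrictTotalOrder J r)
    (s : Finset J) (hs : s.Nonempty) : ∃ a ∈ s, ∀ b ∈ s, b ≠ a → r a b := by
  classical
  letI : IsStrictTotalOrder J r := h
  letI := linearOrderOfSTO r
  exact ⟨s.min' hs, s.min'_mem hs, fun b hb hne =>
    lt_of_le_of_ne (s.min'_le b hb) (Ne.symm hne)⟩

lemma ncard_biUnion_le' {α β : Type*} [Fintype β] (s : Finset α) (t : α → Set β) :
    (⋃ a ∈ s, t a).ncard ≤ ∑ a ∈ s, (t a).ncard := by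
  classical
  induction s using Finset.induction_on with
  | empty => simp
  | insert _ _ ha ih =>
    rename_i a s
    rw [Finset.set_biUnion_insert, Finset.sum_insert ha]
    exact le_trans (Set.ncard_union_le _ _) (Nat.add_le_add_left ih _)

/-- In a job rotation problem where all agents share the common best job `jstar`, for
each agent `i` the number of Pareto efficient assignments giving `jstar` to `i` is at
most the total number of Pareto efficient assignments giving `jstar` to other agents. -/
theorem commonBest_count_bound {N J : Type*} [Fintype N] [DecidableEq N] [Fintype J]
    [DecidableEq J] (hn : 2 ≤ Fintype.card N) (hcard : Fintype.card N = Fintype.card J)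
    (P : N → J → J → Prop) (hP : ∀ i : N, IsStrictTotalOrder J (P i))
    (jstar : J) (htop : ∀ i : N, ∀ j : J, j ≠ jstar → P i jstar j) :
    ∀ i : N,
      {μ : N ≃ J | ParetoEff P μ ∧ μ i = jstar}.ncard ≤
        ∑ j ∈ Finset.univ.erase i,
          {μ : N ≃ J | ParetoEff P μ ∧ μ j = jstar}.ncard := by
  classical
  intro i
  set S : N → Set (N ≃ J) := fun j => {μ : N ≃ J | ParetoEff P μ ∧ μ j = jstar} with hS
  -- second-best job of agent i
  have hJ2 : 2 ≤ Fintype.card J := hcard ▸ hn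
  have hne : (Finset.univ.erase jstar : Finset J).Nonempty := by
    rw [← Finset.card_pos, Finset.card_erase_of_mem (Finset.mem_univ _), Finset.card_univ]
    omega
  obtain ⟨j₂, hj₂mem, hj₂max⟩ := exists_sto_max (P i) (hP i) _ hne
  have hj₂ : j₂ ≠ jstar := (Finset.mem_erase.mp hj₂mem).1
  have hj₂max' : ∀ b : J, b ≠ jstar → b ≠ j₂ → P i j₂ b := fun b hb hb2 =>
    hj₂max b (Finset.mem_erase.mpr ⟨hb, Finset.mem_univ b⟩) hb2
  -- the injection
  set f : (N ≃ J) → (N ≃ J) := fun μ => (Equiv.swap i (μ.symm j₂)).trans μ with hf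
  -- f maps S i into the union of S j, j ≠ i
  have hmap : ∀ μ ∈ S i, f μ ∈ ⋃ j ∈ Finset.univ.erase i, S j := by
    intro μ hμ
    obtain ⟨hPE, hμi⟩ := hμ
    set k : N := μ.symm j₂ with hk
    have hμk : μ k = j₂ := μ.apply_symm_apply j₂
    have hki : k ≠ i := by
      intro h; rw [h, hμi] at hμk; exact hj₂ hμk.symm
    have hνi : f μ i = j₂ := by simp [hf, ← hk, Equiv.swap_apply_left, hμk]
    have hνk : f μ k = jstar := by
      simp [hf, ← hk, Equiv.swap_apply_right, hμi]
    have hνother : ∀ m : N, m ≠ i → m ≠ k → f μ m = μ m := by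
      intro m h1 h2; simp [hf, ← hk, Equiv.swap_apply_of_ne_of_ne h1 h2]
    refine Set.mem_biUnion (Finset.mem_erase.mpr ⟨hki, Finset.mem_univ k⟩) ?_
    refine ⟨?_, hνk⟩
    -- Pareto efficiency of f μ
    rintro ⟨ρ, hw, m, hm⟩
    apply hPE
    -- ρ k = jstar
    have hρk : ρ k = jstar := by
      rcases hw k with h | h
      · rw [h, hνk]
      · by_contra hc
        rw [hνk] at h
        haveI := hP k
        exact asymm_of (P k) h (htop k _ hc)
    have hρi : ρ i = j₂ := by
      rcases hw i with h | h
      · rw [h, hνi]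
      · by_contra hc
        have hρi_ne : ρ i ≠ jstar := fun h' => hki (ρ.injective (hρk.trans h'.symm))
        rw [hνi] at h
        haveI := hP i
        exact asymm_of (P i) h (hj₂max' _ hρi_ne hc)
    -- swap back
    refine ⟨(Equiv.swap i k).trans ρ, fun m' => ?_, ?_⟩
    · rcases eq_or_ne m' i with rfl | h1
      · left; simp [Equiv.swap_apply_left, hρk, hμi]
      rcases eq_or_ne m' k with rfl | h2
      · left; simp [Equiv.swap_apply_right, hρi, hμk]
      · have : (Equiv.swap i k).trans ρ m' = ρ m' := by
          simp [Equiv.swap_apply_of_ne_of_ne h1 h2]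
        rw [this, ← hνother m' h1 h2]
        exact hw m'
    · have hm1 : m ≠ i := by
        intro h
        rw [h, hρi, hνi] at hm
        haveI := hP i
        exact irrefl_of (P i) _ hm
      have hm2 : m ≠ k := by
        intro h
        rw [h, hρk, hνk] at hm
        haveI := hP k
        exact irrefl_of (P k) _ hm
      refine ⟨m, ?_⟩
      have : (Equiv.swap i k).trans ρ m = ρ m := by
        simp [Equiv.swap_apply_of_ne_of_ne hm1 hm2]
      rw [this, ← hνother m hm1 hm2]
      exact hm
  -- injectivity of f on S i
  have hinj : Set.InjOn f (S i) := by
    intro μ₁ h₁ μ₂ h₂ heq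
    have hk1 : f μ₁ (μ₁.symm j₂) = jstar := by
      simp [hf, Equiv.swap_apply_right, h₁.2]
    have hk2 : f μ₂ (μ₂.symm j₂) = jstar := by
      simp [hf, Equiv.swap_apply_right, h₂.2]
    have hkk : μ₁.symm j₂ = μ₂.symm j₂ := by
      apply (f μ₁).injective
      rw [hk1, heq, hk2]
    have : (Equiv.swap i (μ₁.symm j₂)).trans (f μ₁)
        = (Equiv.swap i (μ₂.symm j₂)).trans (f μ₂) := by rw [heq, hkk]
    simpa [hf, ← Equiv.trans_assoc, Equiv.swap_swap] using this
  calc (S i).ncard = (f '' S i).ncard := (Set.ncard_image_of_injOn hinj).symm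
    _ ≤ (⋃ j ∈ Finset.univ.erase i, S j).ncard := by
        apply Set.ncard_le_ncard
        · rintro _ ⟨μ, hμ, rfl⟩; exact hmap μ hμ
        · exact Set.toFinite _
    _ ≤ ∑ j ∈ Finset.univ.erase i, (S j).ncard := ncard_biUnion_le' _ _
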